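/- arXiv:0711.3350 — 5 statements merged into one kernel-verified Lean document; each statement's English description precedes it below -/
import Mathlib

section
/- Let (Ω, ℱ, P) be a probability space with a filtration (ℱ_n)_{n ∈ ℕ}, let M = (M_n) and N = (N_n) be uniformly bounded martingales with respect to (ℱ_n), and let σ and τ be stopping times for (ℱ_n) that are bounded above by some n₀ ∈ ℕ. Then E[M_σ · N_τ] = E[M_{σ∧τ} · N_{σ∧τ}], where M_σ denotes the stopped value of M at σ and σ∧τ is the pointwise minimum of the two stopping times. -/
open MeasureTheory

private lemma aux_integral_stopped_mul
    {Ω : Type*} {m0 : MeasurableSpace Ω} {P : Measure Ω} [IsProbabilityMeasure P]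
    (ℱ : Filtration ℕ m0) (M : ℕ → Ω → ℝ)
    (hM : Martingale M ℱ P) (C : ℝ) (hMbd : ∀ n ω, |M n ω| ≤ C)
    (σ T : Ω → ℕ) (hσ : IsStoppingTime ℱ (fun ω => (σ ω : WithTop ℕ))) (hT : IsStoppingTime ℱ (fun ω => (T ω : WithTop ℕ)))
    (hle : ∀ ω, T ω ≤ σ ω) (n₀ : ℕ) (hσbd : ∀ ω, σ ω ≤ n₀)
    (g : Ω → ℝ) (hg : StronglyMeasurable[hT.measurableSpace] g)
    (D : ℝ) (hgbd : ∀ ω, |g ω| ≤ D) :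
    ∫ ω, M (σ ω) ω * g ω ∂P = ∫ ω, M (T ω) ω * g ω ∂P := by
  have hm : hT.measurableSpace ≤ m0 := hT.measurableSpace_le
  have hTbd : ∀ ω, T ω ≤ n₀ := fun ω => (hle ω).trans (hσbd ω)
  haveI : Nonempty Ω := by
    by_contra h
    rw [not_nonempty_iff] at h
    have h1 := measure_univ (μ := P)
    simp [Set.univ_eq_empty_iff.mpr h] at h1
  have hDnn : 0 ≤ D := (abs_nonneg _).trans (hgbd (Classical.arbitrary _))
  -- measurability of stopped values
  have hmeasσ : StronglyMeasurable[hσ.measurableSpace] (stoppedValue M (fun ω => (σ ω : WithTop ℕ))) :=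
    (measurable_stoppedValue hM.stronglyAdapted.progMeasurable_of_discrete hσ).stronglyMeasurable
  have hmeasT : StronglyMeasurable[hT.measurableSpace] (stoppedValue M (fun ω => (T ω : WithTop ℕ))) :=
    (measurable_stoppedValue hM.stronglyAdapted.progMeasurable_of_discrete hT).stronglyMeasurable
  have hmeasσ0 : AEStronglyMeasurable (stoppedValue M (fun ω => (σ ω : WithTop ℕ))) P :=
    (hmeasσ.mono hσ.measurableSpace_le).aestronglyMeasurable
  have hmeasT0 : AEStronglyMeasurable (stoppedValue M (fun ω => (T ω : WithTop ℕ))) P :=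
    (hmeasT.mono hm).aestronglyMeasurable
  have hg0 : AEStronglyMeasurable g P := (hg.mono hm).aestronglyMeasurable
  -- integrability
  have hintσ : Integrable (stoppedValue M (fun ω => (σ ω : WithTop ℕ))) P :=
    (integrable_const C).mono' hmeasσ0 (Filter.Eventually.of_forall fun ω => by
      rw [Real.norm_eq_abs]; exact hMbd (σ ω) ω)
  have hintprod : Integrable (g * stoppedValue M (fun ω => (σ ω : WithTop ℕ))) P := by
    refine (integrable_const (D * C)).mono' (hg0.mul hmeasσ0)
      (Filter.Eventually.of_forall fun ω => ?_)
    have h1 : |g ω * M (σ ω) ω| ≤ D * C := by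
      rw [abs_mul]
      exact mul_le_mul (hgbd ω) (hMbd _ ω) (abs_nonneg _)
        hDnn
    rw [Pi.mul_apply, Real.norm_eq_abs]; exact h1
  -- optional sampling
  have h1 : stoppedValue M (fun ω => (T ω : WithTop ℕ)) =ᵐ[P] P[stoppedValue M (fun ω => (σ ω : WithTop ℕ)) | hT.measurableSpace] :=
    hM.stoppedValue_ae_eq_condExp_of_le hσ hT (fun ω => WithTop.coe_le_coe.mpr (hle ω))
      (fun ω => WithTop.coe_le_coe.mpr (hσbd ω))
  have h2 : P[g * stoppedValue M (fun ω => (σ ω : WithTop ℕ)) | hT.measurableSpace]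
      =ᵐ[P] g * P[stoppedValue M (fun ω => (σ ω : WithTop ℕ)) | hT.measurableSpace] :=
    condExp_mul_of_stronglyMeasurable_left hg hintprod hintσ
  have h3 : ∫ ω, (g * stoppedValue M (fun ω => (σ ω : WithTop ℕ))) ω ∂P
      = ∫ ω, (P[g * stoppedValue M (fun ω => (σ ω : WithTop ℕ)) | hT.measurableSpace]) ω ∂P :=
    (integral_condExp hm).symm
  calc ∫ ω, M (σ ω) ω * g ω ∂P = ∫ ω, (g * stoppedValue M (fun ω => (σ ω : WithTop ℕ))) ω ∂P := by
        exact integral_congr_ae (Filter.Eventually.of_forall fun ω => mul_comm _ _)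
    _ = ∫ ω, (P[g * stoppedValue M (fun ω => (σ ω : WithTop ℕ)) | hT.measurableSpace]) ω ∂P := h3
    _ = ∫ ω, (g * stoppedValue M (fun ω => (T ω : WithTop ℕ))) ω ∂P := by
        refine integral_congr_ae (h2.trans ?_)
        filter_upwards [h1] with ω hω
        simp [Pi.mul_apply, hω]
    _ = ∫ ω, M (T ω) ω * g ω ∂P := by
        exact integral_congr_ae (Filter.Eventually.of_forall fun ω => mul_comm _ _)

/-- If `M` and `N` are uniformly bounded martingales and `σ`, `τ` are bounded stopping
times, then `E[M_σ N_τ] = E[M_{σ∧τ} N_{σ∧τ}]`. -/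
theorem integral_stopped_product_eq
    {Ω : Type*} {m0 : MeasurableSpace Ω} {P : Measure Ω} [IsProbabilityMeasure P]
    (ℱ : Filtration ℕ m0) (M N : ℕ → Ω → ℝ)
    (hM : Martingale M ℱ P) (hN : Martingale N ℱ P)
    (C : ℝ) (hMbd : ∀ n ω, |M n ω| ≤ C) (hNbd : ∀ n ω, |N n ω| ≤ C)
    (σ τ : Ω → ℕ) (hσ : IsStoppingTime ℱ (fun ω => (σ ω : WithTop ℕ))) (hτ : IsStoppingTime ℱ (fun ω => (τ ω : WithTop ℕ)))
    (n₀ : ℕ) (hσbd : ∀ ω, σ ω ≤ n₀) (hτbd : ∀ ω, τ ω ≤ n₀) :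
    ∫ ω, M (σ ω) ω * N (τ ω) ω ∂P
      = ∫ ω, M (min (σ ω) (τ ω)) ω * N (min (σ ω) (τ ω)) ω ∂P := by
  set T : Ω → ℕ := fun ω => min (σ ω) (τ ω) with hTdef
  have hT : IsStoppingTime ℱ (fun ω => (T ω : WithTop ℕ)) := by
    convert hσ.min hτ using 1
    · rfl
    · funext ω; exact WithTop.coe_min _ _
  have hTσ : ∀ ω, T ω ≤ σ ω := fun ω => min_le_left _ _
  have hTτ : ∀ ω, T ω ≤ τ ω := fun ω => min_le_right _ _
  -- pointwise decomposition
  have hpt : ∀ ω, M (σ ω) ω * N (τ ω) ω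
      = (M (σ ω) ω - M (T ω) ω) * N (T ω) ω + M (T ω) ω * N (τ ω) ω := by
    intro ω
    rcases le_total (σ ω) (τ ω) with h | h
    · simp [hTdef, min_eq_left h]
    · simp only [hTdef, min_eq_right h]
      ring
  -- measurability of stopped values at T
  have hmeasMT : StronglyMeasurable[hT.measurableSpace] (stoppedValue M (fun ω => (T ω : WithTop ℕ))) :=
    (measurable_stoppedValue hM.stronglyAdapted.progMeasurable_of_discrete hT).stronglyMeasurable
  have hmeasNT : StronglyMeasurable[hT.measurableSpace] (stoppedValue N (fun ω => (T ω : WithTop ℕ))) :=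
    (measurable_stoppedValue hN.stronglyAdapted.progMeasurable_of_discrete hT).stronglyMeasurable
  have hMTbd : ∀ ω, |stoppedValue M (fun ω => (T ω : WithTop ℕ)) ω| ≤ C := fun ω => hMbd _ ω
  have hNTbd : ∀ ω, |stoppedValue N (fun ω => (T ω : WithTop ℕ)) ω| ≤ C := fun ω => hNbd _ ω
  -- two applications of the auxiliary lemma
  have key1 : ∫ ω, M (σ ω) ω * N (T ω) ω ∂P = ∫ ω, M (T ω) ω * N (T ω) ω ∂P :=
    aux_integral_stopped_mul ℱ M hM C hMbd σ T hσ hT hTσ n₀ hσbd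
      (stoppedValue N (fun ω => (T ω : WithTop ℕ))) hmeasNT C hNTbd
  have key2 : ∫ ω, N (τ ω) ω * M (T ω) ω ∂P = ∫ ω, N (T ω) ω * M (T ω) ω ∂P :=
    aux_integral_stopped_mul ℱ N hN C hNbd τ T hτ hT hTτ n₀ hτbd
      (stoppedValue M (fun ω => (T ω : WithTop ℕ))) hmeasMT C hMTbd
  -- integrability facts for splitting the integral
  haveI : Nonempty Ω := by
    by_contra h
    rw [not_nonempty_iff] at h
    have h1 := measure_univ (μ := P)
    simp [Set.univ_eq_empty_iff.mpr h] at h1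
  have hCnn : 0 ≤ C := (abs_nonneg _).trans (hMbd 0 (Classical.arbitrary _))
  have hmeas : ∀ (f : ℕ → Ω → ℝ), Martingale f ℱ P → ∀ (ρ : Ω → ℕ),
      IsStoppingTime ℱ (fun ω => (ρ ω : WithTop ℕ)) → AEStronglyMeasurable (fun ω => f (ρ ω) ω) P := by
    intro f hf ρ hρ
    exact ((measurable_stoppedValue hf.stronglyAdapted.progMeasurable_of_discrete
      hρ).stronglyMeasurable.mono hρ.measurableSpace_le).aestronglyMeasurable
  have hint : ∀ (f g : Ω → ℝ), AEStronglyMeasurable f P → AEStronglyMeasurable g P →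
      (∀ ω, |f ω| ≤ C) → (∀ ω, |g ω| ≤ C) → Integrable (fun ω => f ω * g ω) P := by
    intro f g hf hg hfb hgb
    refine (integrable_const (C * C)).mono' (hf.mul hg)
      (Filter.Eventually.of_forall fun ω => ?_)
    have h1 : |f ω * g ω| ≤ C * C := by
      rw [abs_mul]; exact mul_le_mul (hfb ω) (hgb ω) (abs_nonneg _) hCnn
    rw [Real.norm_eq_abs]; exact h1
  have hi1 : Integrable (fun ω => M (σ ω) ω * N (T ω) ω) P :=
    hint _ _ (hmeas M hM σ hσ) (hmeas N hN T hT) (fun ω => hMbd _ ω) (fun ω => hNbd _ ω)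
  have hi2 : Integrable (fun ω => M (T ω) ω * N (T ω) ω) P :=
    hint _ _ (hmeas M hM T hT) (hmeas N hN T hT) (fun ω => hMbd _ ω) (fun ω => hNbd _ ω)
  have hi3 : Integrable (fun ω => M (T ω) ω * N (τ ω) ω) P :=
    hint _ _ (hmeas M hM T hT) (hmeas N hN τ hτ) (fun ω => hMbd _ ω) (fun ω => hNbd _ ω)
  calc ∫ ω, M (σ ω) ω * N (τ ω) ω ∂P
      = ∫ ω, ((M (σ ω) ω - M (T ω) ω) * N (T ω) ω + M (T ω) ω * N (τ ω) ω) ∂P := by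
        exact integral_congr_ae (Filter.Eventually.of_forall hpt)
    _ = ∫ ω, (M (σ ω) ω - M (T ω) ω) * N (T ω) ω ∂P
        + ∫ ω, M (T ω) ω * N (τ ω) ω ∂P := by
        refine integral_add ?_ hi3
        have : (fun ω => (M (σ ω) ω - M (T ω) ω) * N (T ω) ω)
            = fun ω => M (σ ω) ω * N (T ω) ω - M (T ω) ω * N (T ω) ω := by
          funext ω; ring
        rw [this]; exact hi1.sub hi2
    _ = (∫ ω, M (σ ω) ω * N (T ω) ω ∂P - ∫ ω, M (T ω) ω * N (T ω) ω ∂P)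
        + ∫ ω, M (T ω) ω * N (τ ω) ω ∂P := by
        congr 1
        have : (fun ω => (M (σ ω) ω - M (T ω) ω) * N (T ω) ω)
            = fun ω => M (σ ω) ω * N (T ω) ω - M (T ω) ω * N (T ω) ω := by
          funext ω; ring
        rw [this, integral_sub hi1 hi2]
    _ = ∫ ω, M (T ω) ω * N (τ ω) ω ∂P := by rw [key1]; ring
    _ = ∫ ω, M (T ω) ω * N (T ω) ω ∂P := by
        simp_rw [mul_comm (M _ _)]
        exact key2
end

section
/- Let κ ∈ (0,4], set s := 8/κ − 1, let r > 1, and let h : [r,∞) → (0,∞) be continuous. Define Λ(x) := h(x)^{s−1} if κ < 4, and Λ(x) := 1/log(max(x/h(x), 2)) if κ = 4. Assume sup{Λ(x)/Λ(y) : r ≤ x ≤ y ≤ 2x} < ∞ and ∫_r^∞ Λ(x) x^{−s} dx < ∞. Then there exists R₀ > r such that h(x) < x/2 for all x ≥ R₀. -/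
open MeasureTheory

/-- Under the regularity condition (1.2) and the integrability condition (1.3) of the
paper, there exists `R₀ > r` such that `h x < x/2` for all `x ≥ R₀`. -/
theorem exists_R0_h_lt_half
    (κ : ℝ) (hκ : κ ∈ Set.Ioc (0:ℝ) 4) (s : ℝ) (hs : s = 8 / κ - 1)
    (r : ℝ) (hr : 1 < r) (h : ℝ → ℝ)
    (hpos : ∀ x ≥ r, 0 < h x) (hcont : ContinuousOn h (Set.Ici r))
    (Λ : ℝ → ℝ)
    (hΛ : ∀ x ≥ r, Λ x =
      if κ < 4 then h x ^ (s - 1) else 1 / Real.log (max (x / h x) 2))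
    (hreg : ∃ C : ℝ, ∀ x y : ℝ, r ≤ x → x ≤ y → y ≤ 2 * x → Λ x / Λ y ≤ C)
    (hint : IntegrableOn (fun x => Λ x * x ^ (-s)) (Set.Ici r)) :
    ∃ R₀ : ℝ, r < R₀ ∧ ∀ x ≥ R₀, h x < x / 2 := by
  obtain ⟨hκ0, hκ4⟩ := hκ
  obtain ⟨C, hC⟩ := hreg
  by_contra hcon
  push_neg at hcon
  set f : ℝ → ℝ := fun x => Λ x * x ^ (-s) with hf
  have hs1 : 1 ≤ s := by
    rw [hs]
    have : 2 ≤ 8 / κ := (le_div_iff₀ hκ0).mpr (by linarith)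
    linarith
  have hΛpos : ∀ x ≥ r, 0 < Λ x := by
    intro x hx
    rw [hΛ x hx]
    split_ifs with hk
    · exact Real.rpow_pos_of_pos (hpos x hx) _
    · have h1 : (1:ℝ) < max (x / h x) 2 := lt_of_lt_of_le one_lt_two (le_max_right _ _)
      exact div_pos one_pos (Real.log_pos h1)
  have hCpos : (0:ℝ) < C := by
    have h2 := hC r r le_rfl le_rfl (by linarith)
    rw [div_self (hΛpos r le_rfl).ne'] at h2
    linarith
  set c : ℝ := if κ < 4 then (2:ℝ) ^ (1 - s) else 1 / Real.log 2 with hc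
  have hcpos : 0 < c := by
    rw [hc]
    split_ifs with hk
    · exact Real.rpow_pos_of_pos two_pos _
    · exact div_pos one_pos (Real.log_pos one_lt_two)
  -- key pointwise bound when h x₀ ≥ x₀ / 2
  have hkey : ∀ x₀, r ≤ x₀ → x₀ / 2 ≤ h x₀ → c ≤ Λ x₀ * x₀ ^ (1 - s) := by
    intro x₀ hx₀ hhx₀
    have hx₀pos : 0 < x₀ := by linarith
    rw [hΛ x₀ hx₀, hc]
    split_ifs with hk
    · -- κ < 4
      have hsgt : 0 ≤ s - 1 := by linarith
      have h1 : (x₀ / 2) ^ (s - 1) ≤ h x₀ ^ (s - 1) :=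
        Real.rpow_le_rpow (by positivity) hhx₀ hsgt
      have h2 : (x₀ / 2) ^ (s - 1) * x₀ ^ (1 - s) = (2:ℝ) ^ (1 - s) := by
        rw [Real.div_rpow (le_of_lt hx₀pos) (by norm_num : (0:ℝ) ≤ 2), div_mul_eq_mul_div,
          ← Real.rpow_add hx₀pos, show s - 1 + (1 - s) = 0 by ring, Real.rpow_zero,
          show (1:ℝ) - s = -(s-1) by ring, Real.rpow_neg (by norm_num : (0:ℝ) ≤ 2), one_div]
      calc (2:ℝ) ^ (1 - s) = (x₀ / 2) ^ (s - 1) * x₀ ^ (1 - s) := h2.symm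
        _ ≤ h x₀ ^ (s - 1) * x₀ ^ (1 - s) :=
            mul_le_mul_of_nonneg_right h1 (le_of_lt (Real.rpow_pos_of_pos hx₀pos _))
    · -- κ = 4, s = 1
      have hκeq : κ = 4 := le_antisymm hκ4 (not_lt.mp hk)
      have hseq : s = 1 := by rw [hs, hκeq]; norm_num
      have hmax : max (x₀ / h x₀) 2 = 2 := by
        apply max_eq_right
        rw [div_le_iff₀ (hpos x₀ hx₀)]
        linarith
      rw [hmax, hseq]
      simp
  have hεpos : 0 < c * (2:ℝ) ^ (-s) / C := by positivity
  set ε : ℝ := c * (2:ℝ) ^ (-s) / C with hε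
  -- lower bound on the integral over Ioc x₀ (2 x₀)
  have hlow : ∀ x₀, r ≤ x₀ → x₀ / 2 ≤ h x₀ → ε ≤ ∫ y in Set.Ioc x₀ (2 * x₀), f y := by
    intro x₀ hx₀ hhx₀
    have hx₀pos : 0 < x₀ := by linarith
    set m : ℝ := Λ x₀ / C * (2 * x₀) ^ (-s) with hm
    have hsub : Set.Ioc x₀ (2 * x₀) ⊆ Set.Ici r := fun y hy => le_trans hx₀ (le_of_lt hy.1)
    have hstep1 : ∀ y ∈ Set.Ioc x₀ (2 * x₀), m ≤ f y := by
      intro y hy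
      have hyr : r ≤ y := hsub hy
      have hΛy : Λ x₀ / C ≤ Λ y := by
        have := hC x₀ y hx₀ (le_of_lt hy.1) hy.2
        rw [div_le_iff₀ (hΛpos y hyr)] at this
        rw [div_le_iff₀ hCpos]
        linarith
      have hrpow : (2 * x₀) ^ (-s) ≤ y ^ (-s) := by
        apply Real.rpow_le_rpow_of_nonpos (by linarith [hy.1]) hy.2 (by linarith)
      exact mul_le_mul hΛy hrpow (le_of_lt (Real.rpow_pos_of_pos (by positivity) _))
        (le_of_lt (hΛpos y hyr))
    have hmeas : MeasurableSet (Set.Ioc x₀ (2 * x₀)) := measurableSet_Ioc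
    have hInt : IntegrableOn f (Set.Ioc x₀ (2 * x₀)) := hint.mono_set hsub
    have hstep2 := setIntegral_ge_of_const_le hmeas (by simp [measure_Ioc_lt_top.ne]) hstep1 hInt
    have hvol : (volume (Set.Ioc x₀ (2 * x₀))).toReal = x₀ := by
      rw [Real.volume_Ioc, ENNReal.toReal_ofReal (by linarith)]
      ring
    rw [show volume.real (Set.Ioc x₀ (2 * x₀)) = x₀ from hvol, smul_eq_mul, mul_comm] at hstep2
    refine le_trans ?_ hstep2
    -- ε ≤ m * x₀
    have h2x : ((2:ℝ) * x₀) ^ (-s) = (2:ℝ) ^ (-s) * x₀ ^ (-s) :=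
      Real.mul_rpow (by norm_num) (le_of_lt hx₀pos)
    have hxx : x₀ ^ (-s) * x₀ = x₀ ^ (1 - s) := by
      have h3 : x₀ ^ (-s) * x₀ ^ (1:ℝ) = x₀ ^ (-s + 1) := (Real.rpow_add hx₀pos _ _).symm
      rw [Real.rpow_one] at h3
      rw [h3, show -s + 1 = 1 - s by ring]
    have hmx : m * x₀ = Λ x₀ * x₀ ^ (1 - s) * (2:ℝ) ^ (-s) / C := by
      rw [hm, h2x, ← hxx]; ring
    rw [hmx, hε]
    have hmono : c * (2:ℝ) ^ (-s) ≤ Λ x₀ * x₀ ^ (1 - s) * (2:ℝ) ^ (-s) :=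
      mul_le_mul_of_nonneg_right (hkey x₀ hx₀ hhx₀)
        (le_of_lt (Real.rpow_pos_of_pos two_pos _))
    exact (div_le_div_iff_of_pos_right hCpos).mpr hmono
  -- tail of an integrable nonneg function
  have fnonneg : ∀ y ∈ Set.Ici r, 0 ≤ f y := by
    intro y hy
    exact mul_nonneg (le_of_lt (hΛpos y hy))
      (le_of_lt (Real.rpow_pos_of_pos (by simp at hy; linarith) _))
  set I : ℝ := ∫ y in Set.Ioi r, f y with hI
  have htend : Filter.Tendsto (fun b => ∫ x in r..b, f x) Filter.atTop (nhds I) :=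
    intervalIntegral_tendsto_integral_Ioi r (hint.mono_set Set.Ioi_subset_Ici_self)
      Filter.tendsto_id
  have hev : ∀ᶠ b in Filter.atTop, I - ε < ∫ x in r..b, f x :=
    htend.eventually (eventually_gt_nhds (by linarith))
  obtain ⟨B, hB⟩ := hev.exists_forall_of_atTop
  obtain ⟨x₀, hx₀ge, hx₀h⟩ := hcon (max B r + 1) (by linarith [le_max_right B r])
  have hx₀r : r ≤ x₀ := by
    have := le_max_right B r
    linarith [hx₀ge]
  have hx₀B : B ≤ x₀ := by
    have := le_max_left B r
    linarith [hx₀ge]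
  have hx₀h' : x₀ / 2 ≤ h x₀ := by linarith [hx₀h]
  have hx₀pos : 0 < x₀ := by linarith
  -- interval integrability
  have i1 : IntervalIntegrable f volume r x₀ := by
    apply IntegrableOn.intervalIntegrable
    apply hint.mono_set
    rw [Set.uIcc_of_le (by linarith)]
    exact Set.Icc_subset_Ici_self
  have i2 : IntervalIntegrable f volume x₀ (2 * x₀) := by
    apply IntegrableOn.intervalIntegrable
    apply hint.mono_set
    rw [Set.uIcc_of_le (by linarith)]
    exact fun y hy => le_trans hx₀r hy.1
  have hadd : ∫ x in r..(2 * x₀), f x = (∫ x in r..x₀, f x) + ∫ x in x₀..(2 * x₀), f x :=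
    (intervalIntegral.integral_add_adjacent_intervals i1 i2).symm
  have e1 : I - ε < ∫ x in r..x₀, f x := hB x₀ hx₀B
  have e2 : ε ≤ ∫ x in x₀..(2 * x₀), f x := by
    rw [intervalIntegral.integral_of_le (by linarith)]
    exact hlow x₀ hx₀r hx₀h'
  have e3 : ∫ x in r..(2 * x₀), f x ≤ I := by
    rw [intervalIntegral.integral_of_le (by linarith)]
    apply setIntegral_mono_set (hint.mono_set Set.Ioi_subset_Ici_self)
    · exact (ae_restrict_iff' measurableSet_Ioi).mpr
        (Filter.Eventually.of_forall fun y hy => fnonneg y (Set.Ioi_subset_Ici_self hy))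
    · exact (Set.Ioc_subset_Ioi_self).eventuallyLE
  linarith
end

section
/- Let r > 1 and let h : [r,∞) → (0,∞) be continuous. In the complex plane define the graph Γ := {x + i·h(x) : x ≥ r}, the right region Θ₊ := {x + i·y : x ≥ r, 0 ≤ y ≤ h(x)}, and the left region Θ₋ := {−x + i·y : x ≥ r, 0 ≤ y ≤ h(x)}. Let R ≥ √(r² + h(r)²). Then every connected set S ⊆ {z ∈ ℂ : Im z ≥ 0 and |z| ≥ R} that intersects both Θ₊ and Θ₋ also intersects Γ. -/
open Complex

/-- Separation claim of Section 3.2: for `R ≥ √(r² + h(r)²)`, any connected subset of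
the closed upper half-plane minus the open disc `B(0,R)` that meets both the right
region `Θ₊` and the left region `Θ₋` must also meet the graph `Γ` of `h`. -/
theorem graph_separates_regions
    (r : ℝ) (hr : 1 < r) (h : ℝ → ℝ)
    (hpos : ∀ x ≥ r, 0 < h x) (hcont : ContinuousOn h (Set.Ici r))
    (R : ℝ) (hR : Real.sqrt (r ^ 2 + h r ^ 2) ≤ R)
    (S : Set ℂ) (hconn : IsPreconnected S)
    (hS : S ⊆ {z : ℂ | 0 ≤ z.im ∧ R ≤ ‖z‖})
    (hplus : (S ∩ {z : ℂ | r ≤ z.re ∧ 0 ≤ z.im ∧ z.im ≤ h z.re}).Nonempty)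
    (hminus : (S ∩ {z : ℂ | r ≤ -z.re ∧ 0 ≤ z.im ∧ z.im ≤ h (-z.re)}).Nonempty) :
    (S ∩ {z : ℂ | r ≤ z.re ∧ z.im = h z.re}).Nonempty := by
  by_contra hempty
  rw [Set.not_nonempty_iff_eq_empty, Set.eq_empty_iff_forall_notMem] at hempty
  -- no point of S lies on the graph
  have hΓ : ∀ z ∈ S, r ≤ z.re → z.im ≠ h z.re := by
    intro z hz hre him
    exact hempty z ⟨hz, hre, him⟩
  -- continuous extension of h
  set H : ℝ → ℝ := fun x => h (max x r) with hHdef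
  have hH : Continuous H :=
    hcont.comp_continuous (continuous_id.max continuous_const)
      (fun x => le_max_right x r)
  have hHeq : ∀ x, r ≤ x → H x = h x := by
    intro x hx
    simp [hHdef, max_eq_left hx]
  have hR0 : 0 ≤ R := le_trans (Real.sqrt_nonneg _) hR
  have hRsq : r ^ 2 + h r ^ 2 ≤ R ^ 2 := by
    have hs := Real.sq_sqrt (show (0:ℝ) ≤ r ^ 2 + h r ^ 2 by positivity)
    nlinarith [Real.sqrt_nonneg (r ^ 2 + h r ^ 2)]
  -- key: points of S with real part r are above the graph
  have key : ∀ z ∈ S, z.re = r → h r ≤ z.im := by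
    intro z hz hre
    obtain ⟨him0, habs⟩ := hS hz
    have h1 : R ^ 2 ≤ z.re ^ 2 + z.im ^ 2 := by
      have h2 := Complex.sq_norm z
      have h3 := Complex.normSq_apply z
      nlinarith [norm_nonneg z]
    have hhr := hpos r le_rfl
    nlinarith
  -- the two open sets
  set U : Set ℂ := {z : ℂ | r < z.re ∧ z.im < H z.re} with hUdef
  set V : Set ℂ := {z : ℂ | z.re < r} ∪ {z : ℂ | H z.re < z.im} with hVdef
  have hUopen : IsOpen U :=
    (isOpen_lt continuous_const Complex.continuous_re).inter
      (isOpen_lt Complex.continuous_im (hH.comp Complex.continuous_re))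
  have hVopen : IsOpen V :=
    (isOpen_lt Complex.continuous_re continuous_const).union
      (isOpen_lt (hH.comp Complex.continuous_re) Complex.continuous_im)
  have hcover : S ⊆ U ∪ V := by
    intro z hz
    rcases lt_trichotomy z.re r with hlt | heq | hgt
    · exact Or.inr (Or.inl hlt)
    · refine Or.inr (Or.inr ?_)
      have h1 : h r ≤ z.im := key z hz heq
      have h2 : z.im ≠ h z.re := hΓ z hz heq.ge
      show H z.re < z.im
      rw [heq, hHeq r le_rfl]
      rw [heq] at h2
      exact lt_of_le_of_ne h1 (Ne.symm h2)
    · have h2 : z.im ≠ h z.re := hΓ z hz hgt.le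
      rw [← hHeq z.re hgt.le] at h2
      rcases h2.lt_or_gt with hl | hl
      · exact Or.inl ⟨hgt, hl⟩
      · exact Or.inr (Or.inr hl)
  have hUne : (S ∩ U).Nonempty := by
    obtain ⟨z, hz, hre, him0, himle⟩ := hplus
    have hne : z.im ≠ h z.re := hΓ z hz hre
    have hlt : z.im < h z.re := lt_of_le_of_ne himle hne
    have hgt : r < z.re := by
      rcases eq_or_lt_of_le hre with heq | h'
      · exact absurd (key z hz heq.symm) (by rw [← heq] at hlt; linarith)
      · exact h'
    exact ⟨z, hz, hgt, by rw [hHeq z.re hgt.le]; exact hlt⟩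
  have hVne : (S ∩ V).Nonempty := by
    obtain ⟨z, hz, hre, _⟩ := hminus
    exact ⟨z, hz, Or.inl (show z.re < r by linarith)⟩
  obtain ⟨z, _, hzU, hzV⟩ := hconn U V hUopen hVopen hcover hUne hVne
  rcases hzV with hl | hl
  · exact absurd hzU.1 (not_lt.mpr (le_of_lt hl))
  · exact absurd hzU.2 (not_lt.mpr (le_of_lt hl))
end

section
/- Let r > 1, let s ∈ ℝ, and let Λ : [r,∞) → (0,∞) be continuous with sup{Λ(x)/Λ(y) : r ≤ x ≤ y ≤ 2x} < ∞ and ∫_r^∞ Λ(x) x^{−s} dx < ∞. Then there exists a continuous function ρ : [r,∞) → (0,∞) such that lim_{x→∞} ρ(x)/Λ(x) = ∞, ∫_r^∞ ρ(x) x^{−s} dx < ∞, and sup{ρ(x)/ρ(y) : r ≤ x ≤ y ≤ 2x} < ∞. -/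
open MeasureTheory Filter Topology

/-- Existence of the auxiliary weight `ρ` of Section 3.1: given `Λ` positive, continuous,
doubling-regular and with `∫_r^∞ Λ(x) x^{−s} dx < ∞`, there is a continuous positive `ρ`
with `ρ/Λ → ∞`, `∫_r^∞ ρ(x) x^{−s} dx < ∞`, and the same doubling-type regularity. -/
theorem exists_auxiliary_weight
    (r s : ℝ) (hr : 1 < r) (Λ : ℝ → ℝ)
    (hΛpos : ∀ x ≥ r, 0 < Λ x) (hΛcont : ContinuousOn Λ (Set.Ici r))
    (hreg : ∃ C : ℝ, ∀ x y : ℝ, r ≤ x → x ≤ y → y ≤ 2 * x → Λ x / Λ y ≤ C)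
    (hint : IntegrableOn (fun x => Λ x * x ^ (-s)) (Set.Ici r)) :
    ∃ ρ : ℝ → ℝ, ContinuousOn ρ (Set.Ici r) ∧ (∀ x ≥ r, 0 < ρ x) ∧
      Tendsto (fun x => ρ x / Λ x) atTop atTop ∧
      IntegrableOn (fun x => ρ x * x ^ (-s)) (Set.Ici r) ∧
      ∃ D : ℝ, ∀ x y : ℝ, r ≤ x → x ≤ y → y ≤ 2 * x → ρ x / ρ y ≤ D := by
  obtain ⟨C, hC⟩ := hreg
  have hr0 : (0:ℝ) < r := one_pos.trans hr
  set f : ℝ → ℝ := fun x => Λ x * x ^ (-s) with hfdef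
  have hfpos : ∀ x, r ≤ x → 0 < f x := fun x hx =>
    mul_pos (hΛpos x hx) (Real.rpow_pos_of_pos (hr0.trans_le hx) _)
  have hfcont : ContinuousOn f (Set.Ici r) :=
    hΛcont.mul (continuousOn_id.rpow_const fun x hx =>
      Or.inl (ne_of_gt (hr0.trans_le hx)))
  have hfint_Ioi : ∀ x, r ≤ x → IntegrableOn f (Set.Ioi x) := fun x hx =>
    hint.mono_set fun t ht => le_of_lt (hx.trans_lt ht)
  have hfint_ab : ∀ a b : ℝ, r ≤ a → a ≤ b → IntervalIntegrable f volume a b := by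
    intro a b ha hab
    refine (hint.mono_set ?_).intervalIntegrable
    rw [Set.uIcc_of_le hab]
    exact fun t ht => ha.trans ht.1
  -- the tail integral
  set G : ℝ → ℝ := fun x => ∫ t in Set.Ioi x, f t with hGdef
  have hfnonneg_ae : ∀ x, r ≤ x → 0 ≤ᵐ[volume.restrict (Set.Ioi x)] f := by
    intro x hx
    refine (ae_restrict_iff' measurableSet_Ioi).2 (Filter.Eventually.of_forall ?_)
    exact fun t ht => (hfpos t (hx.trans ht.le)).le
  have hGanti : ∀ x y : ℝ, r ≤ x → x ≤ y → G y ≤ G x := fun x y hx hxy =>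
    setIntegral_mono_set (hfint_Ioi x hx) (hfnonneg_ae x hx)
      (HasSubset.Subset.eventuallyLE (Set.Ioi_subset_Ioi hxy))
  have hGpos : ∀ x, r ≤ x → 0 < G x := by
    intro x hx
    have h1 : 0 < ∫ t in x..(x+1), f t :=
      intervalIntegral.intervalIntegral_pos_of_pos_on (hfint_ab x (x+1) hx (by linarith))
        (fun t ht => hfpos t (hx.trans ht.1.le)) (by linarith)
    rw [intervalIntegral.integral_of_le (by linarith : x ≤ x+1)] at h1
    refine h1.trans_le ?_
    exact setIntegral_mono_set (hfint_Ioi x hx) (hfnonneg_ae x hx)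
      (HasSubset.Subset.eventuallyLE Set.Ioc_subset_Ioi_self)
  have hGsplit : ∀ x, r ≤ x → G x = (∫ t in Set.Ioi r, f t) - ∫ t in r..x, f t := by
    intro x hx
    have h1 : Set.Ioc r x ∪ Set.Ioi x = Set.Ioi r := Set.Ioc_union_Ioi_eq_Ioi hx
    have h2 : (∫ t in Set.Ioi r, f t)
        = (∫ t in Set.Ioc r x, f t) + ∫ t in Set.Ioi x, f t := by
      rw [← h1]
      exact setIntegral_union (Set.Ioc_disjoint_Ioi le_rfl) measurableSet_Ioi
        ((hfint_Ioi r le_rfl).mono_set (fun t ht => ht.1))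
        (hfint_Ioi x hx)
    rw [intervalIntegral.integral_of_le hx]
    rw [h2]; ring
  have hprim_cont : ContinuousOn (fun x => ∫ t in r..x, f t) (Set.Ici r) := by
    intro x hx
    have hx' : r ≤ x := hx
    have hcc : ContinuousOn (fun x => ∫ t in r..x, f t) (Set.uIcc r (x+1)) :=
      intervalIntegral.continuousOn_primitive_interval
        ((hint.mono_set ?_))
    · have hx1 : x ∈ Set.Icc r (x+1) := ⟨hx, by linarith⟩
      rw [Set.uIcc_of_le (by linarith : r ≤ x+1)] at hcc
      refine (hcc x hx1).mono_of_mem_nhdsWithin ?_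
      have : Set.Icc r (x+1) = Set.Ici r ∩ Set.Iic (x+1) := (Set.Ici_inter_Iic).symm
      rw [this]
      exact Filter.inter_mem self_mem_nhdsWithin
        (mem_nhdsWithin_of_mem_nhds (Iic_mem_nhds (by linarith)))
    · rw [Set.uIcc_of_le (by linarith : r ≤ x+1)]
      exact fun t ht => ht.1
  have hGcont : ContinuousOn G (Set.Ici r) := by
    refine ((continuousOn_const (c := ∫ t in Set.Ioi r, f t)).sub hprim_cont).congr ?_
    intro x hx
    exact hGsplit x hx
  have htendprim : Tendsto (fun x => ∫ t in r..x, f t) atTop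
      (𝓝 (∫ t in Set.Ioi r, f t)) :=
    intervalIntegral_tendsto_integral_Ioi r (hfint_Ioi r le_rfl) tendsto_id
  have htendG : Tendsto G atTop (𝓝 0) := by
    have h1 : Tendsto (fun x => (∫ t in Set.Ioi r, f t) - ∫ t in r..x, f t) atTop
        (𝓝 ((∫ t in Set.Ioi r, f t) - ∫ t in Set.Ioi r, f t)) :=
      tendsto_const_nhds.sub htendprim
    rw [sub_self] at h1
    refine h1.congr' ?_
    filter_upwards [eventually_ge_atTop r] with x hx
    exact (hGsplit x hx).symm
  have hGder : ∀ x ∈ Set.Ioi r, HasDerivAt G (-(f x)) x := by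
    intro x hx
    have hxr : r < x := hx
    have hcontAt : ContinuousAt f x := hfcont.continuousAt (Ici_mem_nhds hxr)
    have hmeas : StronglyMeasurableAtFilter f (𝓝 x) volume :=
      (hfcont.mono (Set.Ioi_subset_Ici_self)).stronglyMeasurableAtFilter isOpen_Ioi x hx
    have hFder : HasDerivAt (fun u => ∫ t in r..u, f t) (f x) x :=
      intervalIntegral.integral_hasDerivAt_right (hfint_ab r x le_rfl hxr.le) hmeas hcontAt
    have h2 : HasDerivAt (fun u => (∫ t in Set.Ioi r, f t) - ∫ t in r..u, f t) (0 - f x) x :=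
      (hasDerivAt_const x _).sub hFder
    rw [zero_sub] at h2
    refine h2.congr_of_eventuallyEq ?_
    filter_upwards [Ioi_mem_nhds hxr] with u hu
    exact hGsplit u (le_of_lt hu)
  have hsq : ∀ x, r ≤ x → 0 < Real.sqrt (G x) := fun x hx =>
    Real.sqrt_pos.2 (hGpos x hx)
  refine ⟨fun x => Λ x / Real.sqrt (G x), ?_, ?_, ?_, ?_, ?_⟩
  · -- continuity
    exact hΛcont.div (Real.continuous_sqrt.comp_continuousOn hGcont)
      (fun x hx => ne_of_gt (hsq x hx))
  · -- positivity
    exact fun x hx => div_pos (hΛpos x hx) (hsq x hx)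
  · -- tendsto atTop
    have h1 : Tendsto (fun x => Real.sqrt (G x)) atTop (𝓝[>] (0:ℝ)) := by
      rw [tendsto_nhdsWithin_iff]
      constructor
      · have := (Real.continuous_sqrt.tendsto 0).comp htendG
        simpa [Function.comp_def] using this
      · filter_upwards [eventually_ge_atTop r] with x hx
        exact hsq x hx
    have h2 : Tendsto (fun x => (Real.sqrt (G x))⁻¹) atTop atTop :=
      h1.inv_tendsto_nhdsGT_zero
    refine h2.congr' ?_
    filter_upwards [eventually_ge_atTop r] with x hx
    have hΛ := (hΛpos x hx).ne'
    have hs := (hsq x hx).ne'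
    field_simp
  · -- integrability
    have key : IntegrableOn (fun x => (Λ x / Real.sqrt (G x)) * x ^ (-s)) (Set.Ioi r) := by
      refine integrableOn_Ioi_deriv_of_nonneg
        (g := fun x => (-2 : ℝ) * Real.sqrt (G x)) (l := 0) ?_ ?_ ?_ ?_
      · exact ((continuousOn_const.mul
          (Real.continuous_sqrt.comp_continuousOn hGcont)) r Set.self_mem_Ici)
      · intro x hx
        have hGx : G x ≠ 0 := (hGpos x (le_of_lt hx)).ne'
        have hsx := (hsq x (le_of_lt hx)).ne'
        have h1 : HasDerivAt (fun u => Real.sqrt (G u))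
            (1 / (2 * Real.sqrt (G x)) * (-(f x))) x :=
          (Real.hasDerivAt_sqrt hGx).comp x (hGder x hx)
        have h2 := h1.const_mul (-2 : ℝ)
        have h3 : (-2 : ℝ) * (1 / (2 * Real.sqrt (G x)) * (-(f x)))
            = (Λ x / Real.sqrt (G x)) * x ^ (-s) := by
          rw [hfdef]
          field_simp
        rwa [h3] at h2
      · intro x hx
        exact le_of_lt (mul_pos (div_pos (hΛpos x (le_of_lt hx)) (hsq x (le_of_lt hx)))
          (Real.rpow_pos_of_pos (hr0.trans hx) _))
      · have h1 : Tendsto (fun x => (-2:ℝ) * Real.sqrt (G x)) atTop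
            (𝓝 ((-2:ℝ) * Real.sqrt 0)) :=
          (((Real.continuous_sqrt.tendsto 0).comp htendG)).const_mul _
        simpa using h1
    rw [integrableOn_Ici_iff_integrableOn_Ioi]
    exact key
  · -- regularity
    refine ⟨C, fun x y hx hxy hy2 => ?_⟩
    have hGyx : Real.sqrt (G y) ≤ Real.sqrt (G x) :=
      Real.sqrt_le_sqrt (hGanti x y hx hxy)
    have h1 : (1:ℝ) ≤ Real.sqrt (G x) / Real.sqrt (G y) :=
      (one_le_div (hsq y (hx.trans hxy))).2 hGyx
    have h2 : Λ x / Real.sqrt (G x) / (Λ y / Real.sqrt (G y))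
        = (Λ x / Λ y) / (Real.sqrt (G x) / Real.sqrt (G y)) := by
      rw [div_div_div_comm]
    rw [h2]
    refine le_trans (div_le_self ?_ h1) (hC x y hx hxy hy2)
    exact le_of_lt (div_pos (hΛpos x hx) (hΛpos y (hx.trans hxy)))
end

section
/- Let κ ∈ (0,4], set s := 8/κ − 1, let r > 1, and let h : [r,∞) → (0,∞) be continuous with h(x) ≤ x/2 for all x ≥ r. Define Λ(x) := h(x)^{s−1} if κ < 4 and Λ(x) := 1/log(x/h(x)) if κ = 4, and assume C := sup{Λ(x)/Λ(y) : r ≤ x ≤ y ≤ 2x} < ∞. Then there is a finite constant K depending only on κ and C such that for all r ≤ a < b with ∫_a^b Λ(x) x^{−s} dx ≤ 1, one has ∫_a^b ∫_a^x Λ(x) Λ(y) h(x)^{−s} h(y)^{−s} · min{ (h(y)/y)^s , h(x)^s h(y)^s y^{−s} (x−y)^{−s} } dy dx ≤ K. -/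
open MeasureTheory intervalIntegral

private lemma second_moment_bound_aux_meas₁ (c d t : ℝ) :
    Measurable fun u : ℝ => min 1 (c * (d - u) ^ (-t)) := by
  have h1 : Measurable fun u : ℝ => d - u := measurable_const.sub measurable_id
  have h2 : Measurable fun z : ℝ => z ^ (-t) := by measurability
  exact measurable_const.min ((h2.comp h1).const_mul c)

private lemma second_moment_bound_aux_meas₂ (c t : ℝ) :
    Measurable fun u : ℝ => min 1 (c * u ^ (-t)) := by measurability

/-- The analytic second-moment bound of Section 3.2: there is a constant `K` depending
only on `κ` and the regularity constant `C` such that whenever `r ≤ a < b` and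
`∫_a^b Λ(x) x^{−s} dx ≤ 1`, the double integral
`∫_a^b ∫_a^x Λ(x)Λ(y) h(x)^{−s} h(y)^{−s} · min{(h(y)/y)^s, h(x)^s h(y)^s y^{−s}(x−y)^{−s}} dy dx`
is at most `K`. -/
theorem second_moment_bound
    (κ : ℝ) (hκ : κ ∈ Set.Ioc (0:ℝ) 4) (C : ℝ) :
    ∃ K : ℝ, ∀ s : ℝ, s = 8 / κ - 1 → ∀ r : ℝ, 1 < r →
      ∀ h : ℝ → ℝ, ContinuousOn h (Set.Ici r) →
        (∀ x ≥ r, 0 < h x) → (∀ x ≥ r, h x ≤ x / 2) →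
      ∀ Λ : ℝ → ℝ,
        (∀ x ≥ r, Λ x = if κ < 4 then h x ^ (s - 1) else 1 / Real.log (x / h x)) →
        (∀ x y : ℝ, r ≤ x → x ≤ y → y ≤ 2 * x → Λ x / Λ y ≤ C) →
      ∀ a b : ℝ, r ≤ a → a < b →
        (∫ x in a..b, Λ x * x ^ (-s)) ≤ 1 →
        (∫ x in a..b, ∫ y in a..x,
            Λ x * Λ y * h x ^ (-s) * h y ^ (-s) *
              min ((h y / y) ^ s) (h x ^ s * h y ^ s * y ^ (-s) * (x - y) ^ (-s))) ≤ K := by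
  obtain ⟨hκ0, hκ4⟩ := hκ
  refine ⟨2 ^ (8 / κ - 1) * (1 + max C 1 *
      (if κ < 4 then (8 / κ - 1) / ((8 / κ - 1) - 1) else 1 + (Real.log 2)⁻¹)), ?_⟩
  intro s hs r hr h hcont hpos hhalf Λ hΛ hreg a b hra hab hI
  rw [← hs]
  set C' : ℝ := max C 1 with hC'
  set M : ℝ := if κ < 4 then s / (s - 1) else 1 + (Real.log 2)⁻¹ with hM
  set K : ℝ := 2 ^ s * (1 + C' * M) with hK
  -- basic facts about s
  have hs1 : 1 ≤ s := by
    rw [hs]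
    have : 2 ≤ 8 / κ := by rw [le_div_iff₀ hκ0]; linarith
    linarith
  have hspos : 0 < s := lt_of_lt_of_le one_pos hs1
  have hslt : κ < 4 → 1 < s := by
    intro hk
    rw [hs]
    have : 2 < 8 / κ := by rw [lt_div_iff₀ hκ0]; linarith
    linarith
  have hseq : ¬ κ < 4 → s = 1 := by
    intro hk
    have : κ = 4 := le_antisymm hκ4 (not_lt.1 hk)
    rw [hs, this]; norm_num
  have hM1 : 1 ≤ M := by
    rw [hM]
    split_ifs with hk
    · have h1 := hslt hk
      rw [le_div_iff₀ (by linarith)]; linarith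
    · have : 0 < (Real.log 2)⁻¹ := inv_pos.2 (Real.log_pos one_lt_two)
      linarith
  have hC'1 : (1:ℝ) ≤ C' := le_max_right C 1
  have hC'0 : (0:ℝ) ≤ C' := by linarith
  have hK0 : 0 ≤ K := by
    have h2s : (0:ℝ) < 2 ^ s := Real.rpow_pos_of_pos two_pos s
    have : (0:ℝ) ≤ C' * M := mul_nonneg (by linarith) (by linarith)
    positivity
  have hr0 : (0:ℝ) < r := by linarith
  -- positivity of Λ on [r, ∞)
  have hlog2pos : (0:ℝ) < Real.log 2 := Real.log_pos one_lt_two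
  have hratio : ∀ x ≥ r, 2 ≤ x / h x := by
    intro x hx
    rw [le_div_iff₀ (hpos x hx)]
    have := hhalf x hx
    linarith
  have hΛpos : ∀ x ≥ r, 0 < Λ x := by
    intro x hx
    rw [hΛ x hx]
    split_ifs with hk
    · exact Real.rpow_pos_of_pos (hpos x hx) _
    · exact div_pos one_pos (Real.log_pos (by linarith [hratio x hx]))
  -- continuity of Λ on [r, ∞)
  have hΛcont : ContinuousOn Λ (Set.Ici r) := by
    by_cases hk : κ < 4
    · have : ContinuousOn (fun x => h x ^ (s - 1)) (Set.Ici r) :=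
        hcont.rpow_const (fun x hx => Or.inl (ne_of_gt (hpos x hx)))
      exact this.congr (fun x hx => by rw [hΛ x hx, if_pos hk])
    · have hne : ∀ x ∈ Set.Ici r, h x ≠ 0 := fun x hx => ne_of_gt (hpos x hx)
      have hdiv : ContinuousOn (fun x => x / h x) (Set.Ici r) :=
        continuousOn_id.div hcont hne
      have hlogc : ContinuousOn (fun x => Real.log (x / h x)) (Set.Ici r) :=
        hdiv.log (fun x hx => by
          have := hratio x hx
          positivity)
      have : ContinuousOn (fun x => 1 / Real.log (x / h x)) (Set.Ici r) :=
        continuousOn_const.div hlogc (fun x hx =>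
          ne_of_gt (Real.log_pos (by linarith [hratio x hx])))
      exact this.congr (fun x hx => by rw [hΛ x hx, if_neg hk])
  have hsubIci : Set.Icc a b ⊆ Set.Ici r := fun z hz => le_trans hra hz.1
  have hΛint : IntervalIntegrable (fun y => Λ y * y ^ (-s)) volume a b := by
    apply ContinuousOn.intervalIntegrable
    rw [Set.uIcc_of_le hab.le]
    exact (hΛcont.mono hsubIci).mul
      ((continuousOn_id.rpow_const (fun z hz => Or.inl (by
        have : r ≤ z := le_trans hra hz.1
        intro h0; rw [id] at h0; linarith))))
  -- the key pointwise bound on the inner integral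
  have key : ∀ x ∈ Set.Icc a b,
      (∫ y in a..x, Λ x * Λ y * h x ^ (-s) * h y ^ (-s) *
          min ((h y / y) ^ s) (h x ^ s * h y ^ s * y ^ (-s) * (x - y) ^ (-s)))
        ≤ K * (Λ x * x ^ (-s)) := by
    intro x hxmem
    obtain ⟨hax, hxb⟩ := hxmem
    have hrx : r ≤ x := le_trans hra hax
    have hx0 : (0:ℝ) < x := by linarith
    have hhx0 : 0 < h x := hpos x hrx
    have hhxhalf := hhalf x hrx
    have hΛx := hΛpos x hrx
    set P : ℝ → ℝ := fun y => min 1 (h x ^ s * (x - y) ^ (-s)) with hPdef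
    set G : ℝ → ℝ := fun y => Λ y * y ^ (-s) * P y with hGdef
    set m : ℝ := max a (x / 2) with hmdef
    have ham : a ≤ m := le_max_left _ _
    have hmx : m ≤ x := max_le hax (by linarith)
    have hmhalf : x / 2 ≤ m := le_max_right _ _
    have hhalfpow : (x / 2) ^ (-s) = 2 ^ s * x ^ (-s) := by
      rw [Real.div_rpow hx0.le (by norm_num : (0:ℝ) ≤ 2),
        Real.rpow_neg (by norm_num : (0:ℝ) ≤ 2), div_eq_mul_inv, inv_inv, mul_comm]
    have hP01 : ∀ y, y ≤ x → 0 ≤ P y ∧ P y ≤ 1 := by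
      intro y hy
      constructor
      · exact le_min zero_le_one (mul_nonneg (Real.rpow_nonneg hhx0.le s)
          (Real.rpow_nonneg (by linarith) _))
      · exact min_le_left _ _
    -- rewrite the inner integrand
    have hinner : (∫ y in a..x, Λ x * Λ y * h x ^ (-s) * h y ^ (-s) *
          min ((h y / y) ^ s) (h x ^ s * h y ^ s * y ^ (-s) * (x - y) ^ (-s)))
        = (Λ x * h x ^ (-s)) * ∫ y in a..x, G y := by
      rw [← intervalIntegral.integral_const_mul]
      apply intervalIntegral.integral_congr
      intro y hy
      rw [Set.uIcc_of_le hax] at hy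
      have hry : r ≤ y := le_trans hra hy.1
      have hy0 : (0:ℝ) < y := by linarith
      have hhy0 : 0 < h y := hpos y hry
      have e1 : (h y / y) ^ s = h y ^ s * y ^ (-s) := by
        rw [Real.div_rpow hhy0.le hy0.le, Real.rpow_neg hy0.le, div_eq_mul_inv]
      have e2 : h x ^ s * h y ^ s * y ^ (-s) * (x - y) ^ (-s)
          = h y ^ s * y ^ (-s) * (h x ^ s * (x - y) ^ (-s)) := by ring
      have e3 : min ((h y / y) ^ s) (h x ^ s * h y ^ s * y ^ (-s) * (x - y) ^ (-s))
          = h y ^ s * y ^ (-s) * min 1 (h x ^ s * (x - y) ^ (-s)) := by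
        rw [e1, e2, mul_min_of_nonneg _ _
          (mul_nonneg (Real.rpow_nonneg hhy0.le s) (Real.rpow_nonneg hy0.le _)), mul_one]
      have e4 : h y ^ (-s) * h y ^ s = 1 := by
        rw [Real.rpow_neg hhy0.le]
        exact inv_mul_cancel₀ (ne_of_gt (Real.rpow_pos_of_pos hhy0 s))
      simp only [hGdef, hPdef]
      rw [e3]
      linear_combination (Λ x * Λ y * h x ^ (-s) * (y ^ (-s) *
        min 1 (h x ^ s * (x - y) ^ (-s)))) * e4
    -- integrability of G on [a, x]
    have hsubax : Set.uIcc a x ⊆ Set.uIcc a b := by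
      rw [Set.uIcc_of_le hax, Set.uIcc_of_le hab.le]
      exact Set.Icc_subset_Icc le_rfl hxb
    have hPmeas : Measurable P := by
      rw [hPdef]; exact second_moment_bound_aux_meas₁ _ _ _
    have hGmeas : AEStronglyMeasurable G (volume.restrict (Set.Ioc a x)) := by
      have h1 : ContinuousOn (fun y => Λ y * y ^ (-s)) (Set.Icc a x) := by
        apply ContinuousOn.mul
        · exact hΛcont.mono (fun z hz => le_trans hra hz.1)
        · exact continuousOn_id.rpow_const (fun z hz => Or.inl (by
            have : r ≤ z := le_trans hra hz.1
            intro h0; rw [id] at h0; linarith))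
      exact ((h1.aestronglyMeasurable measurableSet_Icc).mono_measure
        (Measure.restrict_mono Set.Ioc_subset_Icc_self le_rfl)).mul
        hPmeas.aestronglyMeasurable
    have hGint : IntervalIntegrable G volume a x := by
      rw [intervalIntegrable_iff_integrableOn_Ioc_of_le hax]
      have hbig : IntegrableOn (fun y => Λ y * y ^ (-s)) (Set.Ioc a x) volume :=
        (intervalIntegrable_iff_integrableOn_Ioc_of_le hax).1 (hΛint.mono_set hsubax)
      refine hbig.mono' hGmeas ?_
      filter_upwards [ae_restrict_mem measurableSet_Ioc] with y hy
      have hry : r ≤ y := le_trans hra hy.1.le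
      have hy0 : (0:ℝ) < y := by linarith
      have hnn : 0 ≤ Λ y * y ^ (-s) :=
        mul_nonneg (hΛpos y hry).le (Real.rpow_nonneg hy0.le _)
      rw [Real.norm_eq_abs, hGdef, abs_of_nonneg (mul_nonneg hnn (hP01 y hy.2).1)]
      calc Λ y * y ^ (-s) * P y ≤ Λ y * y ^ (-s) * 1 :=
            mul_le_mul_of_nonneg_left (hP01 y hy.2).2 hnn
        _ = Λ y * y ^ (-s) := mul_one _
    have hsub1 : Set.uIcc a m ⊆ Set.uIcc a x := by
      rw [Set.uIcc_of_le ham, Set.uIcc_of_le hax]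
      exact Set.Icc_subset_Icc le_rfl hmx
    have hsub2 : Set.uIcc m x ⊆ Set.uIcc a x := by
      rw [Set.uIcc_of_le hmx, Set.uIcc_of_le hax]
      exact Set.Icc_subset_Icc ham le_rfl
    have hsplit : (∫ y in a..x, G y) = (∫ y in a..m, G y) + ∫ y in m..x, G y :=
      (integral_add_adjacent_intervals (hGint.mono_set hsub1) (hGint.mono_set hsub2)).symm
    have hc2nn : (0:ℝ) ≤ h x ^ s * (2 ^ s * x ^ (-s)) :=
      mul_nonneg (Real.rpow_nonneg hhx0.le _)
        (mul_nonneg (Real.rpow_nonneg (by norm_num) _) (Real.rpow_nonneg hx0.le _))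
    -- far piece
    have hfar : (∫ y in a..m, G y) ≤ h x ^ s * (2 ^ s * x ^ (-s)) := by
      rcases le_or_gt m a with hma | ham'
      · have hmeq : m = a := le_antisymm hma ham
        rw [hmeq, intervalIntegral.integral_same]
        exact hc2nn
      · have hm2 : m = x / 2 := by
          rcases max_choice a (x / 2) with h1 | h1
          · exfalso; rw [hmdef.trans h1] at ham'; exact lt_irrefl a ham'
          · rw [hmdef, h1]
        have hint1 : IntervalIntegrable (fun y => Λ y * y ^ (-s)) volume a m :=
          hΛint.mono_set (le_trans hsub1 hsubax)
        have hpb : ∀ y ∈ Set.Icc a m, G y ≤ (h x ^ s * (2 ^ s * x ^ (-s))) * (Λ y * y ^ (-s)) := by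
          intro y hy
          have hry : r ≤ y := le_trans hra hy.1
          have hy0 : (0:ℝ) < y := by linarith
          have hnn : 0 ≤ Λ y * y ^ (-s) :=
            mul_nonneg (hΛpos y hry).le (Real.rpow_nonneg hy0.le _)
          have hyx : y ≤ x := le_trans hy.2 hmx
          have hxy : x / 2 ≤ x - y := by
            have := hy.2; rw [hm2] at this; linarith
          have hPb : P y ≤ h x ^ s * (2 ^ s * x ^ (-s)) := by
            refine le_trans (min_le_right _ _) ?_
            apply mul_le_mul_of_nonneg_left ?_ (Real.rpow_nonneg hhx0.le s)
            calc (x - y) ^ (-s) ≤ (x / 2) ^ (-s) :=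
                  Real.rpow_le_rpow_of_nonpos (by linarith) hxy (by linarith)
              _ = 2 ^ s * x ^ (-s) := hhalfpow
          calc G y = Λ y * y ^ (-s) * P y := rfl
            _ ≤ Λ y * y ^ (-s) * (h x ^ s * (2 ^ s * x ^ (-s))) :=
                mul_le_mul_of_nonneg_left hPb hnn
            _ = (h x ^ s * (2 ^ s * x ^ (-s))) * (Λ y * y ^ (-s)) := by ring
        have htail : (∫ y in a..m, Λ y * y ^ (-s)) ≤ 1 := by
          have hint2 : IntervalIntegrable (fun y => Λ y * y ^ (-s)) volume m b := by
            apply hΛint.mono_set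
            rw [Set.uIcc_of_le (le_trans hmx hxb), Set.uIcc_of_le hab.le]
            exact Set.Icc_subset_Icc ham le_rfl
          have hadd := integral_add_adjacent_intervals hint1 hint2
          have hpos2 : 0 ≤ ∫ y in m..b, Λ y * y ^ (-s) := by
            apply intervalIntegral.integral_nonneg (le_trans hmx hxb)
            intro u hu
            have hru : r ≤ u := le_trans hra (le_trans ham hu.1)
            exact mul_nonneg (hΛpos u hru).le (Real.rpow_nonneg (by linarith) _)
          linarith
        calc (∫ y in a..m, G y)
            ≤ ∫ y in a..m, (h x ^ s * (2 ^ s * x ^ (-s))) * (Λ y * y ^ (-s)) :=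
              integral_mono_on ham (hGint.mono_set hsub1) (hint1.const_mul _) hpb
          _ = (h x ^ s * (2 ^ s * x ^ (-s))) * ∫ y in a..m, Λ y * y ^ (-s) :=
              intervalIntegral.integral_const_mul _ _
          _ ≤ (h x ^ s * (2 ^ s * x ^ (-s))) * 1 := mul_le_mul_of_nonneg_left htail hc2nn
          _ = h x ^ s * (2 ^ s * x ^ (-s)) := mul_one _
    -- near piece
    set Mx : ℝ := if κ < 4 then s / (s - 1) else 1 + Real.log (x / h x) with hMxdef
    have hMx1 : 1 ≤ Mx := by
      rw [hMxdef]
      split_ifs with hk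
      · have h1 := hslt hk
        rw [le_div_iff₀ (by linarith)]; linarith
      · have : Real.log 2 ≤ Real.log (x / h x) := Real.log_le_log two_pos (hratio x hrx)
        linarith
    have hcnn : (0:ℝ) ≤ C' * Λ x * (2 ^ s * x ^ (-s)) :=
      mul_nonneg (mul_nonneg hC'0 hΛx.le)
        (mul_nonneg (Real.rpow_nonneg (by norm_num) _) (Real.rpow_nonneg hx0.le _))
    have hPint : IntervalIntegrable P volume m x := by
      rw [intervalIntegrable_iff_integrableOn_Ioc_of_le hmx]
      have hconst : IntegrableOn (fun _ : ℝ => (1:ℝ)) (Set.Ioc m x) volume :=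
        integrableOn_const measure_Ioc_lt_top.ne
      refine hconst.mono' hPmeas.aestronglyMeasurable ?_
      filter_upwards [ae_restrict_mem measurableSet_Ioc] with y hy
      rw [Real.norm_eq_abs, abs_of_nonneg (hP01 y hy.2).1]
      exact (hP01 y hy.2).2
    have hstep1 : ∀ y ∈ Set.Icc m x, G y ≤ (C' * Λ x * (2 ^ s * x ^ (-s))) * P y := by
      intro y hy
      have hry : r ≤ y := le_trans hra (le_trans ham hy.1)
      have hy0 : (0:ℝ) < y := by linarith
      have hyhalf : x / 2 ≤ y := le_trans hmhalf hy.1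
      have hΛy : Λ y ≤ C' * Λ x := by
        have h1 := hreg y x hry hy.2 (by linarith)
        have h2 : Λ y / Λ x ≤ C' := le_trans h1 (le_max_left C 1)
        calc Λ y = (Λ y / Λ x) * Λ x := by field_simp
          _ ≤ C' * Λ x := mul_le_mul_of_nonneg_right h2 hΛx.le
      have hyp : y ^ (-s) ≤ 2 ^ s * x ^ (-s) := by
        calc y ^ (-s) ≤ (x / 2) ^ (-s) :=
              Real.rpow_le_rpow_of_nonpos (by linarith) hyhalf (by linarith)
          _ = 2 ^ s * x ^ (-s) := hhalfpow
      calc G y = Λ y * y ^ (-s) * P y := rfl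
        _ ≤ (C' * Λ x) * (2 ^ s * x ^ (-s)) * P y := by
            apply mul_le_mul_of_nonneg_right ?_ (hP01 y hy.2).1
            exact mul_le_mul hΛy hyp (Real.rpow_nonneg hy0.le _)
              (mul_nonneg hC'0 hΛx.le)
        _ = (C' * Λ x * (2 ^ s * x ^ (-s))) * P y := by ring
    have hnear1 : (∫ y in m..x, G y)
        ≤ (C' * Λ x * (2 ^ s * x ^ (-s))) * ∫ y in m..x, P y := by
      calc (∫ y in m..x, G y) ≤ ∫ y in m..x, (C' * Λ x * (2 ^ s * x ^ (-s))) * P y :=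
            integral_mono_on hmx (hGint.mono_set hsub2) (hPint.const_mul _) hstep1
        _ = (C' * Λ x * (2 ^ s * x ^ (-s))) * ∫ y in m..x, P y :=
            intervalIntegral.integral_const_mul _ _
    -- change of variables
    have hchange : (∫ y in m..x, P y)
        = ∫ u in (0:ℝ)..(x - m), min 1 (h x ^ s * u ^ (-s)) := by
      have hcs := intervalIntegral.integral_comp_sub_left
        (a := m) (b := x) (fun u => min 1 (h x ^ s * u ^ (-s))) x
      simp only [sub_self] at hcs
      exact hcs
    set T : ℝ := x - m with hTdef
    have hT0 : 0 ≤ T := by rw [hTdef]; linarith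
    have hT2 : T ≤ x / 2 := by rw [hTdef]; linarith
    have hφmeas : Measurable (fun u : ℝ => min 1 (h x ^ s * u ^ (-s))) :=
      second_moment_bound_aux_meas₂ _ _
    have hφint : ∀ p q : ℝ, 0 ≤ p → p ≤ q →
        IntervalIntegrable (fun u => min 1 (h x ^ s * u ^ (-s))) volume p q := by
      intro p q hp hpq
      rw [intervalIntegrable_iff_integrableOn_Ioc_of_le hpq]
      have hconst : IntegrableOn (fun _ : ℝ => (1:ℝ)) (Set.Ioc p q) volume :=
        integrableOn_const measure_Ioc_lt_top.ne
      refine hconst.mono' hφmeas.aestronglyMeasurable ?_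
      filter_upwards [ae_restrict_mem measurableSet_Ioc] with u hu
      have hu0 : (0:ℝ) < u := lt_of_le_of_lt hp hu.1
      rw [Real.norm_eq_abs, abs_of_nonneg (le_min zero_le_one
        (mul_nonneg (Real.rpow_nonneg hhx0.le s) (Real.rpow_nonneg hu0.le _)))]
      exact min_le_left _ _
    -- the one-dimensional integral bound
    have hJ : (∫ u in (0:ℝ)..T, min 1 (h x ^ s * u ^ (-s))) ≤ h x * Mx := by
      rcases le_or_gt T (h x) with hTh | hTh
      · calc (∫ u in (0:ℝ)..T, min 1 (h x ^ s * u ^ (-s)))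
            ≤ ∫ u in (0:ℝ)..T, (1:ℝ) :=
              integral_mono_on hT0 (hφint 0 T le_rfl hT0) intervalIntegrable_const
                (fun u _ => min_le_left _ _)
          _ = T := by simp
          _ ≤ h x := hTh
          _ ≤ h x * Mx := le_mul_of_one_le_right hhx0.le hMx1
      · have hsplit2 : (∫ u in (0:ℝ)..T, min 1 (h x ^ s * u ^ (-s)))
            = (∫ u in (0:ℝ)..(h x), min 1 (h x ^ s * u ^ (-s)))
              + ∫ u in (h x)..T, min 1 (h x ^ s * u ^ (-s)) :=
          (integral_add_adjacent_intervals (hφint 0 (h x) le_rfl hhx0.le)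
            (hφint (h x) T hhx0.le hTh.le)).symm
        have hpart1 : (∫ u in (0:ℝ)..(h x), min 1 (h x ^ s * u ^ (-s))) ≤ h x := by
          calc (∫ u in (0:ℝ)..(h x), min 1 (h x ^ s * u ^ (-s)))
              ≤ ∫ u in (0:ℝ)..(h x), (1:ℝ) :=
                integral_mono_on hhx0.le (hφint 0 (h x) le_rfl hhx0.le)
                  intervalIntegrable_const (fun u _ => min_le_left _ _)
            _ = h x := by simp
        have hrpowint : IntervalIntegrable (fun u : ℝ => h x ^ s * u ^ (-s))
            volume (h x) T := by
          apply ContinuousOn.intervalIntegrable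
          apply continuousOn_const.mul
          apply continuousOn_id.rpow_const
          intro u hu
          rw [Set.uIcc_of_le hTh.le] at hu
          exact Or.inl (by intro h0; rw [id] at h0; linarith [hu.1])
        have hpart2 : (∫ u in (h x)..T, min 1 (h x ^ s * u ^ (-s)))
            ≤ h x ^ s * ∫ u in (h x)..T, u ^ (-s) := by
          calc (∫ u in (h x)..T, min 1 (h x ^ s * u ^ (-s)))
              ≤ ∫ u in (h x)..T, h x ^ s * u ^ (-s) :=
                integral_mono_on hTh.le (hφint (h x) T hhx0.le hTh.le) hrpowint
                  (fun u _ => min_le_right _ _)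
            _ = h x ^ s * ∫ u in (h x)..T, u ^ (-s) :=
                intervalIntegral.integral_const_mul _ _
        have hnotmem : (0:ℝ) ∉ Set.uIcc (h x) T := by
          rw [Set.uIcc_of_le hTh.le]
          intro hc
          linarith [hc.1]
        by_cases hk : κ < 4
        · have hs1' := hslt hk
          have hrint : (∫ u in (h x)..T, u ^ (-s))
              = (T ^ (-s + 1) - h x ^ (-s + 1)) / (-s + 1) :=
            integral_rpow (Or.inr ⟨by
              intro hc
              rw [neg_inj] at hc
              linarith, hnotmem⟩)
          have hTpow : 0 ≤ T ^ (-s + 1) := Real.rpow_nonneg hT0 _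
          have hgen : ∀ A B : ℝ, (A - B) / (-s + 1) = (B - A) / (s - 1) := by
            intro A B
            rw [show (-s + 1 : ℝ) = -(s - 1) by ring, div_neg, ← neg_div, neg_sub]
          have hle : (∫ u in (h x)..T, u ^ (-s)) ≤ h x ^ (-s + 1) / (s - 1) := by
            rw [hrint, hgen]
            exact (div_le_div_iff_of_pos_right (by linarith : (0:ℝ) < s - 1)).2 (by linarith)
          have hpow1 : h x ^ s * (h x ^ (-s + 1) / (s - 1)) = h x / (s - 1) := by
            rw [← mul_div_assoc, ← Real.rpow_add hhx0]
            norm_num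
          have h2 : h x ^ s * ∫ u in (h x)..T, u ^ (-s) ≤ h x / (s - 1) := by
            calc h x ^ s * ∫ u in (h x)..T, u ^ (-s)
                ≤ h x ^ s * (h x ^ (-s + 1) / (s - 1)) :=
                  mul_le_mul_of_nonneg_left hle (Real.rpow_nonneg hhx0.le s)
              _ = h x / (s - 1) := hpow1
          rw [hsplit2, hMxdef, if_pos hk]
          have heq : h x + h x / (s - 1) = h x * (s / (s - 1)) := by
            have hne : s - 1 ≠ 0 := ne_of_gt (by linarith)
            field_simp
            ring
          linarith [hpart1, le_trans hpart2 h2]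
        · have hseq1 := hseq hk
          have hrint : (∫ u in (h x)..T, u ^ (-s)) = Real.log (T / h x) := by
            rw [hseq1]
            have hcg : ∀ u ∈ Set.uIcc (h x) T, u ^ (-(1:ℝ)) = 1 / u := by
              intro u _
              rw [Real.rpow_neg_one, one_div]
            rw [intervalIntegral.integral_congr hcg, integral_one_div hnotmem]
          have hloglog : Real.log (T / h x) ≤ Real.log (x / h x) := by
            apply Real.log_le_log (div_pos (by linarith) hhx0)
            exact (div_le_div_iff_of_pos_right hhx0).2 (by linarith)
          rw [hsplit2, hMxdef, if_neg hk]
          have h2 : h x ^ s * ∫ u in (h x)..T, u ^ (-s) ≤ h x * Real.log (x / h x) := by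
            rw [hrint, hseq1, Real.rpow_one]
            exact mul_le_mul_of_nonneg_left hloglog hhx0.le
          have heq : h x * (1 + Real.log (x / h x))
              = h x + h x * Real.log (x / h x) := by ring
          linarith [hpart1, le_trans hpart2 h2]
    have hnear : (∫ y in m..x, G y)
        ≤ (C' * Λ x * (2 ^ s * x ^ (-s))) * (h x * Mx) := by
      refine le_trans hnear1 (mul_le_mul_of_nonneg_left ?_ hcnn)
      rw [hchange]
      exact hJ
    -- final assembly
    have hone : h x ^ (-s) * h x ^ s = 1 := by
      rw [Real.rpow_neg hhx0.le]
      exact inv_mul_cancel₀ (ne_of_gt (Real.rpow_pos_of_pos hhx0 s))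
    have hcore : Λ x * (h x ^ (-s) * h x) * Mx ≤ M := by
      by_cases hk : κ < 4
      · have hΛxeq : Λ x = h x ^ (s - 1) := by rw [hΛ x hrx, if_pos hk]
        have hprod : Λ x * (h x ^ (-s) * h x) = 1 := by
          rw [hΛxeq]
          calc h x ^ (s - 1) * (h x ^ (-s) * h x)
              = h x ^ (s - 1) * h x ^ (-s) * h x ^ (1:ℝ) := by rw [Real.rpow_one]; ring
            _ = h x ^ ((s - 1) + (-s) + 1) := by
                rw [← Real.rpow_add hhx0, ← Real.rpow_add hhx0]
            _ = 1 := by rw [show (s - 1) + (-s) + 1 = (0:ℝ) by ring, Real.rpow_zero]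
        rw [hprod, one_mul, hMxdef, if_pos hk, hM, if_pos hk]
      · have hseq1 := hseq hk
        have hΛxeq : Λ x = 1 / Real.log (x / h x) := by rw [hΛ x hrx, if_neg hk]
        have hlogpos : 0 < Real.log (x / h x) := Real.log_pos (by linarith [hratio x hrx])
        have h1 : h x ^ (-s) * h x = 1 := by
          rw [hseq1, Real.rpow_neg_one]
          exact inv_mul_cancel₀ (ne_of_gt hhx0)
        have hΛlog : Λ x * Real.log (x / h x) = 1 := by
          rw [hΛxeq]; field_simp
        have hΛle : Λ x ≤ (Real.log 2)⁻¹ := by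
          rw [hΛxeq, one_div]
          exact inv_anti₀ hlog2pos (Real.log_le_log two_pos (hratio x hrx))
        rw [hM, if_neg hk, hMxdef, if_neg hk, h1, mul_one]
        calc Λ x * (1 + Real.log (x / h x)) = Λ x + Λ x * Real.log (x / h x) := by ring
          _ = Λ x + 1 := by rw [hΛlog]
          _ ≤ (Real.log 2)⁻¹ + 1 := by linarith [hΛle]
          _ = 1 + (Real.log 2)⁻¹ := by ring
    rw [hinner]
    have hGtot : (∫ y in a..x, G y)
        ≤ h x ^ s * (2 ^ s * x ^ (-s)) + (C' * Λ x * (2 ^ s * x ^ (-s))) * (h x * Mx) := by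
      rw [hsplit]; exact add_le_add hfar hnear
    have hc1nn : 0 ≤ Λ x * h x ^ (-s) := mul_nonneg hΛx.le (Real.rpow_nonneg hhx0.le _)
    calc (Λ x * h x ^ (-s)) * ∫ y in a..x, G y
        ≤ (Λ x * h x ^ (-s)) * (h x ^ s * (2 ^ s * x ^ (-s))
            + (C' * Λ x * (2 ^ s * x ^ (-s))) * (h x * Mx)) :=
          mul_le_mul_of_nonneg_left hGtot hc1nn
      _ = 2 ^ s * x ^ (-s) * Λ x * (h x ^ (-s) * h x ^ s)
          + C' * (2 ^ s * (x ^ (-s) * Λ x)) * (Λ x * (h x ^ (-s) * h x) * Mx) := by ring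
      _ ≤ 2 ^ s * x ^ (-s) * Λ x * 1 + C' * (2 ^ s * (x ^ (-s) * Λ x)) * M := by
          apply add_le_add
          · rw [hone]
          · apply mul_le_mul_of_nonneg_left hcore
            exact mul_nonneg hC'0 (mul_nonneg (Real.rpow_nonneg (by norm_num) _)
              (mul_nonneg (Real.rpow_nonneg hx0.le _) hΛx.le))
      _ = K * (Λ x * x ^ (-s)) := by rw [hK]; ring
  by_cases hIout : IntervalIntegrable (fun x => ∫ y in a..x,
      Λ x * Λ y * h x ^ (-s) * h y ^ (-s) *
        min ((h y / y) ^ s) (h x ^ s * h y ^ s * y ^ (-s) * (x - y) ^ (-s))) volume a b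
  · calc (∫ x in a..b, ∫ y in a..x, Λ x * Λ y * h x ^ (-s) * h y ^ (-s) *
          min ((h y / y) ^ s) (h x ^ s * h y ^ s * y ^ (-s) * (x - y) ^ (-s)))
        ≤ ∫ x in a..b, K * (Λ x * x ^ (-s)) := by
          apply intervalIntegral.integral_mono_on hab.le hIout (hΛint.const_mul K) key
      _ = K * ∫ x in a..b, Λ x * x ^ (-s) := intervalIntegral.integral_const_mul K _
      _ ≤ K * 1 := mul_le_mul_of_nonneg_left hI hK0
      _ = K := mul_one K
  · rw [intervalIntegral.integral_undef hIout]
    exact hK0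
end
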